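/- Let R be a one-dimensional local domain with fraction field Q, and let M be a finitely generated R-module of rank one (i.e., dim_Q(M ⊗_R Q) = 1). If f : M → R is a nonzero R-linear map with image I = f(M), then tr_R(M) = tr_R(I). -/

import Mathlib

open TensorProduct

/-- The trace ideal of an `R`-module `M`: the ideal generated by all images of
`R`-linear maps `M → R`. -/
noncomputable def traceIdeal (R M : Type*) [CommRing R] [AddCommGroup M] [Module R M] :
    Ideal R :=
  ⨆ f : M →ₗ[R] R, LinearMap.range f

/-- Let `R` be a one-dimensional Noetherian local domain with fraction field `Q`, and
`M` a finitely generated `R`-module of rank one.  If `f : M → R` is a nonzero linear map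
with image `I`, then `tr_R(M) = tr_R(I)`. -/
theorem stmt4 (R : Type*) [CommRing R] [IsDomain R] [IsNoetherianRing R] [IsLocalRing R]
    (hdim : ringKrullDim R = 1)
    (Q : Type*) [Field Q] [Algebra R Q] [IsFractionRing R Q]
    (M : Type*) [AddCommGroup M] [Module R M] [Module.Finite R M]
    (hrank : Module.finrank Q (Q ⊗[R] M) = 1)
    (f : M →ₗ[R] R) (hf : f ≠ 0) :
    traceIdeal R M = traceIdeal R (LinearMap.range f) := by
  classical
  have halg : Function.Injective (algebraMap R Q) := IsFractionRing.injective R Q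
  -- base change of a functional
  let F : (M →ₗ[R] R) → (Q ⊗[R] M →ₗ[Q] Q) := fun g =>
    (TensorProduct.AlgebraTensorModule.rid R Q Q).toLinearMap ∘ₗ g.baseChange Q
  have hF : ∀ (g : M →ₗ[R] R) (m : M), F g (1 ⊗ₜ m) = algebraMap R Q (g m) := by
    intro g m
    simp [F, Algebra.algebraMap_eq_smul_one]
  -- F f is injective
  have hFD : FiniteDimensional Q (Q ⊗[R] M) := inferInstance
  have hFfne : F f ≠ 0 := by
    obtain ⟨m, hm⟩ : ∃ m, f m ≠ 0 := by
      by_contra h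
      push_neg at h
      exact hf (LinearMap.ext fun m => h m)
    intro h0
    have := hF f m
    rw [h0] at this
    simp only [LinearMap.zero_apply] at this
    exact hm (halg (by simpa using this.symm))
  have hker_bot : LinearMap.ker (F f) = ⊥ := by
    by_contra hne
    have h1 : 1 ≤ Module.finrank Q (LinearMap.ker (F f)) := by
      rw [Nat.one_le_iff_ne_zero]
      intro h0
      exact hne (Submodule.finrank_eq_zero.mp h0)
    have htop : LinearMap.ker (F f) = ⊤ :=
      Submodule.eq_top_of_finrank_eq (le_antisymm
        (Submodule.finrank_le _) (hrank ▸ h1))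
    exact hFfne (LinearMap.ker_eq_top.mp htop)
  -- key: ker f ≤ ker g for every g
  have hker : ∀ g : M →ₗ[R] R, LinearMap.ker f ≤ LinearMap.ker g := by
    intro g m hm
    have h1 : (1 : Q) ⊗ₜ[R] m = 0 := by
      have : F f (1 ⊗ₜ m) = 0 := by
        rw [hF]
        simpa using congrArg (algebraMap R Q) (LinearMap.mem_ker.mp hm)
      rwa [← LinearMap.mem_ker, hker_bot, Submodule.mem_bot] at this
    have : algebraMap R Q (g m) = 0 := by
      rw [← hF g m, h1, map_zero]
    simpa using halg (by simpa using this)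
  apply le_antisymm
  · refine iSup_le fun g => ?_
    have hle := hker g
    let h : LinearMap.range f →ₗ[R] R :=
      (Submodule.liftQ (LinearMap.ker f) g hle) ∘ₗ
        (f.quotKerEquivRange).symm.toLinearMap
    have hrange : LinearMap.range g ≤ LinearMap.range h := by
      rintro x ⟨m, rfl⟩
      refine ⟨f.rangeRestrict m, ?_⟩
      have : f.rangeRestrict m = ⟨f m, LinearMap.mem_range_self f m⟩ := rfl
      simp [h, this, LinearMap.quotKerEquivRange_symm_apply_image]
    exact hrange.trans (le_iSup (fun h : LinearMap.range f →ₗ[R] R => LinearMap.range h) h)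
  · refine iSup_le fun h => ?_
    have : LinearMap.range h ≤ LinearMap.range (h ∘ₗ f.rangeRestrict) := by
      rintro x ⟨y, rfl⟩
      obtain ⟨m, hm⟩ := f.surjective_rangeRestrict y
      exact ⟨m, by simp [hm]⟩
    exact this.trans (le_iSup (fun g : M →ₗ[R] R => LinearMap.range g) _)
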